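/- Let A and B be (n,d)-types with A_i ⊆ B_i for all i ∈ [n]. Then A is a refinement of B (i.e., there exists an ordered partition P = (P_1,...,P_k) of [d] such that A_i = B_i ∩ P_{m(i)} where m(i) is the smallest index with B_i ∩ P_{m(i)} nonempty) if and only if the comparability graph CG(A,B) is acyclic. -/

import Mathlib

open Finset

/-- An `(n,d)`-type: an `n`-tuple of subsets of `[d]`. -/
abbrev NDType (n d : ℕ) := Fin n → Finset (Fin d)

/-- All entries nonempty. -/
def IsType {n d : ℕ} (A : NDType n d) : Prop := ∀ i, (A i).Nonempty

/-- A directed edge `u → v` of the comparability graph `CG(A,B)`: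
for some coordinate `i`, `u ∈ A i`, `v ∈ B i`, and not both lie in `A i ∩ B i`. -/
def DirEdge {n d : ℕ} (A B : NDType n d) (u v : Fin d) : Prop :=
  u ≠ v ∧ ∃ i, u ∈ A i ∧ v ∈ B i ∧ ¬ (u ∈ A i ∩ B i ∧ v ∈ A i ∩ B i)

/-- An undirected edge of `CG(A,B)`: both endpoints lie in some `A i ∩ B i`. -/
def UndirEdge {n d : ℕ} (A B : NDType n d) (u v : Fin d) : Prop :=
  u ≠ v ∧ ∃ i, u ∈ A i ∩ B i ∧ v ∈ A i ∩ B i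

/-- A step of a directed walk in `CG(A,B)`: a directed edge in the right
direction, or an undirected edge. -/
def Step {n d : ℕ} (A B : NDType n d) (u v : Fin d) : Prop :=
  DirEdge A B u v ∨ UndirEdge A B u v

/-- `CG(A,B)` contains a directed cycle: a closed walk all of whose directed
edges point in the walk direction, with at least one directed edge. -/
def HasDirectedCycle {n d : ℕ} (A B : NDType n d) : Prop :=
  ∃ (k : ℕ) (v : Fin (k + 1) → Fin d),
    v 0 = v (Fin.last k) ∧
    (∀ i : Fin k, Step A B (v i.castSucc) (v i.succ)) ∧
    (∃ i : Fin k, DirEdge A B (v i.castSucc) (v i.succ))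

/-- The comparability graph `CG(A,B)` is acyclic. -/
def Acyclic {n d : ℕ} (A B : NDType n d) : Prop := ¬ HasDirectedCycle A B

/-- An ordered partition of `[d]` into `k` (nonempty, ordered) parts. -/
def IsOrderedPartition {d k : ℕ} (P : Fin k → Finset (Fin d)) : Prop :=
  (∀ a, (P a).Nonempty) ∧ (∀ a b, a ≠ b → Disjoint (P a) (P b)) ∧
    (∀ j : Fin d, ∃ a, j ∈ P a)

/-- `B` is the refinement `A|P` of `A` with respect to the ordered partition `P`:
`B i = A i ∩ P (m i)` where `m i` is the least index with nonempty intersection. -/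
def IsRefinementBy {n d k : ℕ} (A : NDType n d) (P : Fin k → Finset (Fin d))
    (B : NDType n d) : Prop :=
  ∀ i, ∃ a, (A i ∩ P a).Nonempty ∧ (∀ b, b < a → A i ∩ P b = ∅) ∧
    B i = A i ∩ P a

/-- `B` is a refinement of `A` (with respect to some ordered partition). -/
def IsRefinement {n d : ℕ} (B A : NDType n d) : Prop :=
  ∃ (k : ℕ) (P : Fin k → Finset (Fin d)),
    IsOrderedPartition P ∧ IsRefinementBy A P B

/-- A total refinement: a refinement all of whose entries are singletons. -/
def IsTotalRefinement {n d : ℕ} (B A : NDType n d) : Prop :=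
  IsRefinement B A ∧ ∀ i, ∃ j, B i = {j}

/-- A tope: a type all of whose entries are singletons. -/
def IsTope {n d : ℕ} (A : NDType n d) : Prop := ∀ i, ∃ j, A i = {j}
open Pointwise

/-- The `j`-th standard basis vector of `ℝ^d`. -/
noncomputable def stdVec {d : ℕ} (j : Fin d) : Fin d → ℝ := Pi.single j 1

/-- The Minkowski cell `C_A = Σᵢ conv{e_j : j ∈ A i} ⊆ ℝ^d` of an `(n,d)`-type. -/
noncomputable def cell {n d : ℕ} (A : NDType n d) : Set (Fin d → ℝ) :=
  ∑ i : Fin n, convexHull ℝ (stdVec '' (A i : Set (Fin d)))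

/-- The dilated simplex `nΔ^{d-1} ⊆ ℝ^d`. -/
def dilSimplex (n d : ℕ) : Set (Fin d → ℝ) :=
  {x | (∀ j, 0 ≤ x j) ∧ ∑ j, x j = (n : ℝ)}

/-- A mixed subdivision of `nΔ^{d-1}`, encoded by the set of types of its cells:
all entries of a cell type are nonempty, the family of cells is closed under
faces (= refinements), any two cells intersect in the Minkowski sum of the
intersections of their summands, and the cells cover `nΔ^{d-1}`. -/
structure MixedSubdivision (n d : ℕ) where
  cells : Set (NDType n d)
  isType : ∀ A ∈ cells, IsType A
  refine_closed : ∀ A ∈ cells, ∀ B, IsRefinement B A → B ∈ cells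
  inter : ∀ A ∈ cells, ∀ B ∈ cells,
    cell A ∩ cell B = cell (fun i => A i ∩ B i)
  covers : ⋃ A ∈ cells, cell A = dilSimplex n d

/-- From a refl-trans chain of steps we extract an explicit walk indexed by `ℕ`. -/
private lemma natWalk {n d : ℕ} {A B : NDType n d} {u v : Fin d}
    (h : Relation.ReflTransGen (Step A B) u v) :
    ∃ (k : ℕ) (w : ℕ → Fin d), w 0 = u ∧ w k = v ∧ ∀ i < k, Step A B (w i) (w (i+1)) := by
  induction h with
  | refl => exact ⟨0, fun _ => u, rfl, rfl, by omega⟩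
  | @tail b c _ hbc ih =>
    obtain ⟨k, w, h0, hk, hs⟩ := ih
    refine ⟨k+1, fun m => if m ≤ k then w m else c, by simp [h0], by simp, ?_⟩
    intro i hi
    rcases lt_or_eq_of_le (Nat.lt_succ_iff.1 hi) with hlt | heq
    · simpa [Nat.le_of_lt hlt, Nat.succ_le_of_lt hlt] using hs i hlt
    · subst heq
      simpa [hk] using hbc

/-- A directed edge `u → v` together with a walk back from `v` to `u` yields a
directed cycle, contradicting acyclicity. -/
private lemma cycle_absurd {n d : ℕ} {A B : NDType n d} {u v : Fin d}
    (hac : Acyclic A B) (h : Relation.ReflTransGen (Step A B) v u)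
    (hd : DirEdge A B u v) : False := by
  obtain ⟨k, w, h0, hk, hs⟩ := natWalk h
  apply hac
  refine ⟨k+1, fun j => if (j : ℕ) ≤ k then w j else v, ?_, ?_, ?_⟩
  · have : ((Fin.last (k+1) : Fin (k+2)) : ℕ) = k+1 := rfl
    simp [this, h0]
  · intro i
    have hc : ((i.castSucc : Fin (k+2)) : ℕ) = (i : ℕ) := rfl
    have hsv : ((i.succ : Fin (k+2)) : ℕ) = (i : ℕ) + 1 := rfl
    rcases lt_or_eq_of_le (Nat.lt_succ_iff.1 i.isLt) with hlt | heq
    · simpa [hc, hsv, Nat.le_of_lt hlt, Nat.succ_le_of_lt hlt] using hs i hlt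
    · simp only [hc, hsv, heq]
      simpa [hk, Step] using Or.inl hd
  · refine ⟨Fin.last k, ?_⟩
    have hc : (((Fin.last k).castSucc : Fin (k+2)) : ℕ) = k := rfl
    have hsv : (((Fin.last k).succ : Fin (k+2)) : ℕ) = k + 1 := rfl
    simp only [hc, hsv]
    simpa [hk] using hd

/-- Between a member of `A i` and a member of `B i` there is always a step
(unless they coincide). -/
private lemma step_or_eq {n d : ℕ} {A B : NDType n d} (hsub : ∀ i, A i ⊆ B i)
    {i : Fin n} {u v : Fin d} (hu : u ∈ A i) (hv : v ∈ B i) :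
    u = v ∨ Step A B u v := by
  by_cases huv : u = v
  · exact Or.inl huv
  right
  by_cases hvA : v ∈ A i
  · exact Or.inr ⟨huv, i, Finset.mem_inter.2 ⟨hu, hsub i hu⟩,
      Finset.mem_inter.2 ⟨hvA, hv⟩⟩
  · exact Or.inl ⟨huv, i, hu, hv, fun h => hvA (Finset.mem_inter.1 h.2).1⟩

/-- The rank function: the number of vertices from which `j` is reachable. -/
private noncomputable def fval {n d : ℕ} (A B : NDType n d) (j : Fin d) : ℕ :=
  Set.ncard {w | Relation.ReflTransGen (Step A B) w j}

private lemma fval_mono {n d : ℕ} {A B : NDType n d} {u v : Fin d}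
    (h : Relation.ReflTransGen (Step A B) u v) : fval A B u ≤ fval A B v :=
  Set.ncard_le_ncard (fun _ hw => hw.trans h) (Set.toFinite _)

private lemma fval_strict {n d : ℕ} {A B : NDType n d} {u v : Fin d}
    (h : Relation.ReflTransGen (Step A B) u v)
    (h' : ¬ Relation.ReflTransGen (Step A B) v u) :
    fval A B u < fval A B v := by
  apply Set.ncard_lt_ncard _ (Set.toFinite _)
  constructor
  · exact fun _ hw => hw.trans h
  · intro hss
    exact h' (hss (Relation.ReflTransGen.refl))

/-- For `(n,d)`-types `A ⊆ B` (componentwise), `A` is a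
refinement of `B` iff the comparability graph `CG(A,B)` is acyclic. -/
theorem refinement_iff_acyclic {n d : ℕ} (A B : NDType n d)
    (hA : IsType A) (hB : IsType B) (hsub : ∀ i, A i ⊆ B i) :
    IsRefinement A B ↔ Acyclic A B := by
  constructor
  · -- refinement ⇒ acyclic
    rintro ⟨k, P, ⟨hne, hdisj, hcov⟩, href⟩
    rintro ⟨m, v, h0, hstep, i0, hdir⟩
    -- the part index of a vertex
    have gmem : ∀ j : Fin d, j ∈ P (hcov j).choose := fun j => (hcov j).choose_spec
    set g : Fin d → Fin k := fun j => (hcov j).choose with hg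
    have guniq : ∀ j a, j ∈ P a → g j = a := by
      intro j a hja
      by_contra hne'
      exact Finset.disjoint_left.1 (hdisj _ _ hne') (gmem j) hja
    -- steps do not decrease the part index, directed edges increase it
    have hle : ∀ {x y : Fin d}, Step A B x y → g x ≤ g y := by
      rintro x y (⟨hxy, i, hx, hy, hnb⟩ | ⟨hxy, i, hx, hy⟩)
      · obtain ⟨a, hane, hmin, heq⟩ := href i
        have hxa : x ∈ P a := by
          have : x ∈ B i ∩ P a := heq ▸ hx
          exact (Finset.mem_inter.1 this).2
        have hgx : g x = a := guniq x a hxa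
        have : ¬ g y < a := by
          intro hlt
          have := hmin (g y) hlt
          have : y ∈ (∅ : Finset (Fin d)) := this ▸ Finset.mem_inter.2 ⟨hy, gmem y⟩
          simp at this
        rw [hgx]; exact not_lt.1 this
      · obtain ⟨a, hane, hmin, heq⟩ := href i
        have hx' : x ∈ A i := (Finset.mem_inter.1 hx).1
        have hy' : y ∈ A i := (Finset.mem_inter.1 hy).1
        have hxa : x ∈ P a := (Finset.mem_inter.1 (heq ▸ hx')).2
        have hya : y ∈ P a := (Finset.mem_inter.1 (heq ▸ hy')).2
        rw [guniq x a hxa, guniq y a hya]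
    have hlt : ∀ {x y : Fin d}, DirEdge A B x y → g x < g y := by
      rintro x y ⟨hxy, i, hx, hy, hnb⟩
      obtain ⟨a, hane, hmin, heq⟩ := href i
      have hxBa : x ∈ B i ∩ P a := heq ▸ hx
      have hgx : g x = a := guniq x a (Finset.mem_inter.1 hxBa).2
      have hge : g x ≤ g y := hle (Or.inl ⟨hxy, i, hx, hy, hnb⟩)
      rcases lt_or_eq_of_le hge with h | h
      · exact h
      · exfalso
        have hya : y ∈ P a := by rw [← hgx, h]; exact gmem y
        have hyA : y ∈ A i := heq ▸ Finset.mem_inter.2 ⟨hy, hya⟩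
        exact hnb ⟨Finset.mem_inter.2 ⟨hx, hsub i hx⟩, Finset.mem_inter.2 ⟨hyA, hy⟩⟩
    -- walk along the cycle: part indices are monotone, strictly at i0
    set w : ℕ → Fin d := fun p => v ⟨min p m, by omega⟩ with hw
    have hwstep : ∀ p < m, (g (w p) : ℕ) ≤ (g (w (p+1)) : ℕ) := by
      intro p hp
      have h1 : w p = v (Fin.castSucc ⟨p, hp⟩) := by
        show v _ = v _; congr 1; apply Fin.ext
        simp [Nat.min_eq_left (le_of_lt hp)]
      have h2 : w (p+1) = v (Fin.succ ⟨p, hp⟩) := by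
        show v _ = v _; congr 1; apply Fin.ext
        simp [Nat.min_eq_left (Nat.succ_le_of_lt hp)]
      rw [h1, h2]
      exact_mod_cast hle (hstep ⟨p, hp⟩)
    have hmono : ∀ p q, p ≤ q → q ≤ m → (g (w p) : ℕ) ≤ (g (w q) : ℕ) := by
      intro p q h
      induction q, h using Nat.le_induction with
      | base => intro _; exact le_rfl
      | succ q hpq ih =>
        intro hq
        exact le_trans (ih (by omega)) (hwstep q (by omega))
    have hstr : (g (w (i0 : ℕ)) : ℕ) < (g (w ((i0 : ℕ) + 1)) : ℕ) := by
      have h1 : w (i0 : ℕ) = v i0.castSucc := by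
        show v _ = v _; congr 1; apply Fin.ext
        simp [Nat.min_eq_left (le_of_lt i0.isLt)]
      have h2 : w ((i0 : ℕ)+1) = v i0.succ := by
        show v _ = v _; congr 1; apply Fin.ext
        simp [Nat.min_eq_left (Nat.succ_le_of_lt i0.isLt)]
      rw [h1, h2]
      exact_mod_cast hlt hdir
    have hw0 : w 0 = v 0 := by
      show v _ = v _; congr 1
    have hwm : w m = v (Fin.last m) := by
      show v _ = v _; congr 1; apply Fin.ext; simp
    have hA0 : (g (w 0) : ℕ) ≤ (g (w (i0 : ℕ)) : ℕ) :=
      hmono 0 (i0 : ℕ) (Nat.zero_le _) (le_of_lt i0.isLt)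
    have hA1 : (g (w ((i0 : ℕ)+1)) : ℕ) ≤ (g (w m) : ℕ) :=
      hmono _ m (Nat.succ_le_of_lt i0.isLt) le_rfl
    have : (g (w 0) : ℕ) < (g (w 0) : ℕ) := by
      calc (g (w 0) : ℕ) ≤ _ := hA0
        _ < _ := hstr
        _ ≤ (g (w m) : ℕ) := hA1
        _ = (g (w 0) : ℕ) := by rw [hw0, hwm, h0]
    omega
  · -- acyclic ⇒ refinement
    intro hac
    classical
    set f : Fin d → ℕ := fval A B with hf
    set s : Finset ℕ := Finset.image f Finset.univ with hs
    refine ⟨s.card, fun a => Finset.univ.filter (fun j => f j = (s.orderIsoOfFin rfl a : ℕ)),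
      ⟨?_, ?_, ?_⟩, ?_⟩
    · -- parts nonempty
      intro a
      have : ((s.orderIsoOfFin rfl a : ℕ)) ∈ s := (s.orderIsoOfFin rfl a).2
      obtain ⟨j, _, hj⟩ := Finset.mem_image.1 this
      exact ⟨j, Finset.mem_filter.2 ⟨Finset.mem_univ j, hj⟩⟩
    · -- parts disjoint
      intro a b hab
      refine Finset.disjoint_left.2 ?_
      intro j hja hjb
      have h1 := (Finset.mem_filter.1 hja).2
      have h2 := (Finset.mem_filter.1 hjb).2
      have : (s.orderIsoOfFin rfl a : ℕ) = (s.orderIsoOfFin rfl b : ℕ) := by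
        rw [← h1, ← h2]
      exact hab ((s.orderIsoOfFin rfl).injective (Subtype.ext this))
    · -- parts cover
      intro j
      have hjs : f j ∈ s := Finset.mem_image.2 ⟨j, Finset.mem_univ j, rfl⟩
      obtain ⟨a, ha⟩ := (s.orderIsoOfFin rfl).surjective ⟨f j, hjs⟩
      exact ⟨a, Finset.mem_filter.2 ⟨Finset.mem_univ j,
        by rw [ha]⟩⟩
    · -- the refinement condition
      intro i
      obtain ⟨u, hu⟩ := hA i
      have hus : f u ∈ s := Finset.mem_image.2 ⟨u, Finset.mem_univ u, rfl⟩
      obtain ⟨a, ha⟩ := (s.orderIsoOfFin rfl).surjective ⟨f u, hus⟩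
      have hav : (s.orderIsoOfFin rfl a : ℕ) = f u := by rw [ha]
      have key : ∀ v ∈ B i, f u ≤ f v := by
        intro v hv
        rcases step_or_eq hsub hu hv with h | h
        · rw [h]
        · exact fval_mono (Relation.ReflTransGen.single h)
      refine ⟨a, ?_, ?_, ?_⟩
      · exact ⟨u, Finset.mem_inter.2 ⟨hsub i hu,
          Finset.mem_filter.2 ⟨Finset.mem_univ u, hav.symm⟩⟩⟩
      · intro b hb
        rw [Finset.eq_empty_iff_forall_notMem]
        intro v hv
        obtain ⟨hv1, hv2⟩ := Finset.mem_inter.1 hv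
        have hvval : f v = (s.orderIsoOfFin rfl b : ℕ) := (Finset.mem_filter.1 hv2).2
        have hblt : ((s.orderIsoOfFin rfl b : ℕ)) < ((s.orderIsoOfFin rfl a : ℕ)) :=
          (s.orderIsoOfFin rfl).lt_iff_lt.2 hb
        have := key v hv1
        omega
      · apply Finset.Subset.antisymm
        · intro x hx
          refine Finset.mem_inter.2 ⟨hsub i hx, Finset.mem_filter.2 ⟨Finset.mem_univ x, ?_⟩⟩
          have h1 : f u ≤ f x := key x (hsub i hx)
          have h2 : f x ≤ f u := by
            rcases step_or_eq hsub hx (hsub i hu) with h | h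
            · rw [h]
            · exact fval_mono (Relation.ReflTransGen.single h)
          rw [hav]; omega
        · intro x hx
          obtain ⟨hx1, hx2⟩ := Finset.mem_inter.1 hx
          have hxval : f x = (s.orderIsoOfFin rfl a : ℕ) := (Finset.mem_filter.1 hx2).2
          by_contra hxA
          have hxu : u ≠ x := fun h => hxA (h ▸ hu)
          have hde : DirEdge A B u x :=
            ⟨hxu, i, hu, hx1, fun h => hxA (Finset.mem_inter.1 h.2).1⟩
          have hnr : ¬ Relation.ReflTransGen (Step A B) x u := fun h =>
            cycle_absurd hac h hde
          have := fval_strict (Relation.ReflTransGen.single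
            (by rcases step_or_eq hsub hu hx1 with h | h
                · exact absurd h hxu
                · exact h)) hnr
          rw [← hf] at this
          omega
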